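/- For every countable collection C of infinite languages over U, the GNF dimension of C is equal to the closure dimension of C (in particular, one is finite if and only if the other is, and then they are equal). -/

import Mathlib

/-!
STATEMENT 13: For every countable collection C of infinite languages over U, the GNF
dimension of C equals the closure dimension of C (as values in ℕ∞, so in particular
one is finite iff the other is, and then they are equal).

In the no-feedback interaction model a completed round is a pair (x_t, z_t); a
generator strategy maps (history, current input) to the output z_t, and an adversary
strategy maps the history of completed rounds to the next input x_t.
-/

/-- The history of the first `t` completed rounds of the interaction between the
adversary strategy `Adv` and generator strategy `Gen`. -/
def nfRun {U : Type} (Adv : List (U × U) → U) (Gen : List (U × U) → U → U) :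
    ℕ → List (U × U)
  | 0 => []
  | t + 1 =>
      let h := nfRun Adv Gen t
      h ++ [(Adv h, Gen h (Adv h))]

/-- The adversary's input `x` at round `t` (0-indexed) of the transcript T(Adv, Gen). -/
def nfX {U : Type} (Adv : List (U × U) → U) (Gen : List (U × U) → U → U) (t : ℕ) : U :=
  Adv (nfRun Adv Gen t)

/-- The generator's output `z` at round `t` of the transcript T(Adv, Gen). -/
def nfZ {U : Type} (Adv : List (U × U) → U) (Gen : List (U × U) → U → U) (t : ℕ) : U :=
  Gen (nfRun Adv Gen t) (nfX Adv Gen t)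

/-- `S_r`: the set of distinct inputs among the first `r` rounds. -/
def nfS {U : Type} (Adv : List (U × U) → U) (Gen : List (U × U) → U → U) (r : ℕ) :
    Set U :=
  nfX Adv Gen '' {t | t < r}

/-- The adversary strategy `Adv` is consistent with the language `K` (against `Gen`):
the inputs form an enumeration of `K`. -/
def nfConsistent {U : Type} (Adv : List (U × U) → U) (Gen : List (U × U) → U → U)
    (K : Set U) : Prop :=
  (∀ t, nfX Adv Gen t ∈ K) ∧ ∀ w ∈ K, ∃ t, nfX Adv Gen t = w

/-- `C_r(T)`: the languages of `C` consistent with the transcript up to round `r`. -/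
def nfCons {U : Type} (C : Set (Set U)) (Adv : List (U × U) → U)
    (Gen : List (U × U) → U → U) (r : ℕ) : Set (Set U) :=
  {Lang ∈ C | ∀ t < r, nfX Adv Gen t ∈ Lang}

/-- The effective intersection `E_r(T)`. -/
def nfE {U : Type} (C : Set (Set U)) (Adv : List (U × U) → U)
    (Gen : List (U × U) → U → U) (r : ℕ) : Set U :=
  ⋂₀ nfCons C Adv Gen r \ nfS Adv Gen r

/-- The GNF dimension of `C`: the supremum of all `d ∈ ℕ` such that for every
generator strategy there are a language `K ∈ C` and an adversary strategy consistent
with `K` whose transcript has a finite round `r ≥ d` with `|S_r| ≥ d` and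
`E_r(T) = ∅`. -/
noncomputable def gnfDim {U : Type} (C : Set (Set U)) : ℕ∞ :=
  sSup {e : ℕ∞ | ∃ d : ℕ, e = (d : ℕ∞) ∧
    ∀ Gen : List (U × U) → U → U,
      ∃ K ∈ C, ∃ Adv : List (U × U) → U,
        nfConsistent Adv Gen K ∧
        ∃ r : ℕ, d ≤ r ∧ d ≤ (nfS Adv Gen r).ncard ∧ nfE C Adv Gen r = ∅}

/-- The closure dimension of `C`: the supremum of sizes of finite sets `S ⊆ U` such
that the intersection of all languages of `C` containing `S` is finite. -/
noncomputable def closureDim {U : Type} (C : Set (Set U)) : ℕ∞ :=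
  sSup {e : ℕ∞ | ∃ S : Finset U, e = (S.card : ℕ∞) ∧
    (⋂₀ {Lang ∈ C | (S : Set U) ⊆ Lang}).Finite}


lemma nfRun_length {U : Type} (Adv : List (U × U) → U) (Gen : List (U × U) → U → U)
    (t : ℕ) : (nfRun Adv Gen t).length = t := by
  induction t with
  | zero => rfl
  | succ n ih => simp [nfRun, ih]

lemma nfX_of_length {U : Type} (f : ℕ → U) (Gen : List (U × U) → U → U) (t : ℕ) :
    nfX (fun h => f h.length) Gen t = f t := by
  simp [nfX, nfRun_length]

theorem gnfDim_eq_closureDim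
    (U : Type) [Countable U] [Infinite U]
    (C : Set (Set U)) (hC : C.Countable) (hInf : ∀ L ∈ C, L.Infinite) :
    gnfDim C = closureDim C := by
  apply le_antisymm
  · -- gnfDim ≤ closureDim
    apply sSup_le
    rintro e ⟨d, rfl, hP⟩
    obtain ⟨K, hK, Adv, hcons, r, hrd, hcard, hE⟩ := hP (fun _ x => x)
    set Gen : List (U × U) → U → U := fun _ x => x with hGen
    have hSfin : (nfS Adv Gen r).Finite := (Set.finite_Iio r).image _
    have hfam : {Lang ∈ C | (↑hSfin.toFinset : Set U) ⊆ Lang} = nfCons C Adv Gen r := by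
      ext L
      simp only [Set.mem_setOf_eq, nfCons, Set.Finite.coe_toFinset]
      constructor
      · rintro ⟨hL, hsub⟩
        exact ⟨hL, fun t ht => hsub ⟨t, ht, rfl⟩⟩
      · rintro ⟨hL, hall⟩
        refine ⟨hL, ?_⟩
        rintro x ⟨t, ht, rfl⟩
        exact hall t ht
    have hfin : (⋂₀ {Lang ∈ C | (↑hSfin.toFinset : Set U) ⊆ Lang}).Finite := by
      rw [hfam]
      apply hSfin.subset
      intro x hx
      by_contra hxS
      have : x ∈ nfE C Adv Gen r := ⟨hx, hxS⟩
      rw [hE] at this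
      exact this
    have hdcard : (d : ℕ∞) ≤ (hSfin.toFinset.card : ℕ∞) := by
      rw [← Set.ncard_eq_toFinset_card _ hSfin]
      exact_mod_cast hcard
    exact le_trans hdcard (le_sSup ⟨hSfin.toFinset, rfl, hfin⟩)
  · -- closureDim ≤ gnfDim
    apply sSup_le
    rintro e ⟨S, rfl, hFin⟩
    apply le_sSup
    refine ⟨S.card, rfl, ?_⟩
    intro Gen
    set F : Set U := ⋂₀ {Lang ∈ C | (S : Set U) ⊆ Lang} with hF
    -- the family is nonempty
    have hfamne : {Lang ∈ C | (S : Set U) ⊆ Lang}.Nonempty := by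
      by_contra h
      rw [Set.not_nonempty_iff_eq_empty] at h
      rw [hF, h, Set.sInter_empty] at hFin
      exact Set.infinite_univ hFin
    obtain ⟨K, hKC, hSK⟩ := hfamne
    have hKinf : K.Infinite := hInf K hKC
    have hFK : F ⊆ K := Set.sInter_subset_of_mem ⟨hKC, hSK⟩
    have hSF : (S : Set U) ⊆ F := by
      intro x hx
      exact Set.mem_sInter.2 fun L hL => hL.2 hx
    -- closed: for L ∈ C, S ⊆ L ↔ F ⊆ L
    have hclosed : ∀ L ∈ C, ((S : Set U) ⊆ L ↔ F ⊆ L) := by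
      intro L hL
      constructor
      · intro hSL
        exact Set.sInter_subset_of_mem ⟨hL, hSL⟩
      · intro hFL
        exact subset_trans hSF hFL
    -- enumeration
    haveI : Infinite ↥K := hKinf.to_subtype
    obtain ⟨g⟩ : Nonempty (ℕ ≃ ↥K) := nonempty_equiv_of_countable
    set l : List U := hFin.toFinset.toList with hl
    set n : ℕ := l.length with hn
    set f : ℕ → U := fun t => if h : t < n then l.get ⟨t, h⟩ else (g (t - n) : U) with hf
    set Adv : List (U × U) → U := fun h => f h.length with hAdv
    have hX : ∀ t, nfX Adv Gen t = f t := nfX_of_length f Gen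
    have hmem_l : ∀ x : U, x ∈ l ↔ x ∈ F := by
      intro x
      rw [hl, Finset.mem_toList, Set.Finite.mem_toFinset]
    have hflt : ∀ t (h : t < n), f t = l.get ⟨t, h⟩ := by
      intro t h
      simp only [hf]
      rw [dif_pos h]
    have hfge : ∀ t, ¬ t < n → f t = (g (t - n) : U) := by
      intro t h
      simp only [hf]
      rw [dif_neg h]
    have hfK : ∀ t, f t ∈ K := by
      intro t
      by_cases h : t < n
      · rw [hflt t h]
        exact hFK ((hmem_l _).1 (l.get_mem _))
      · rw [hfge t h]
        exact (g (t - n)).2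
    -- image of f over {t | t < n} is F
    have himg : f '' {t | t < n} = F := by
      ext x
      constructor
      · rintro ⟨t, ht, rfl⟩
        simp only [Set.mem_setOf_eq] at ht
        rw [hflt t ht]
        exact (hmem_l _).1 (l.get_mem _)
      · intro hx
        obtain ⟨i, hi⟩ := List.mem_iff_get.1 ((hmem_l x).2 hx)
        exact ⟨i, i.2, by rw [hflt i i.2]; exact hi⟩
    have hSn : nfS Adv Gen n = F := by
      rw [nfS]
      rw [show (nfX Adv Gen '' {t | t < n}) = f '' {t | t < n} by
        apply Set.image_congr; intro t _; exact hX t]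
      exact himg
    have hcardn : S.card ≤ n := by
      rw [hn, hl, Finset.length_toList]
      apply Finset.card_le_card
      intro x hx
      rw [Set.Finite.mem_toFinset]
      exact hSF hx
    refine ⟨K, hKC, Adv, ⟨fun t => hX t ▸ hfK t, ?_⟩, n, hcardn, ?_, ?_⟩
    · -- surjectivity onto K
      intro w hw
      refine ⟨n + g.symm ⟨w, hw⟩, ?_⟩
      rw [hX, hfge _ (by omega)]
      rw [show n + (g.symm ⟨w, hw⟩ : ℕ) - n = (g.symm ⟨w, hw⟩ : ℕ) by omega]
      simp
    · -- cardinality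
      rw [hSn]
      have : F.ncard = hFin.toFinset.card := Set.ncard_eq_toFinset_card _ hFin
      rw [this]
      have : n = hFin.toFinset.card := by rw [hn, hl, Finset.length_toList]
      omega
    · -- E_n = ∅
      have hcons : nfCons C Adv Gen n = {Lang ∈ C | (S : Set U) ⊆ Lang} := by
        ext L
        simp only [nfCons, Set.mem_setOf_eq]
        constructor
        · rintro ⟨hL, hall⟩
          refine ⟨hL, (hclosed L hL).2 ?_⟩
          rw [← hSn]
          rintro x ⟨t, ht, rfl⟩
          exact hall t ht
        · rintro ⟨hL, hSL⟩
          refine ⟨hL, fun t ht => ?_⟩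
          have : nfX Adv Gen t ∈ F := by
            rw [← hSn]; exact ⟨t, ht, rfl⟩
          exact (hclosed L hL).1 hSL this
      rw [nfE, hcons, ← hF, hSn]
      exact Set.diff_self
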